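/- Every outerplanar graph G satisfies ζ(G) ≤ 3. -/

import Mathlib

open SimpleGraph

/-- A walk is monochromatic under an edge coloring if all its edges get one color. -/
def Monochromatic {V α : Type*} {G : SimpleGraph V} {u v : V}
    (c : Sym2 V → α) (p : G.Walk u v) : Prop :=
  ∃ a, ∀ e ∈ p.edges, c e = a

/-- An edge coloring is strongly woody if no broken cycle (a path of length ≥ 2 whose
endpoints are adjacent, i.e. a cycle minus one edge) is monochromatic. -/
def StronglyWoody {V α : Type*} (G : SimpleGraph V) (c : Sym2 V → α) : Prop :=
  ∀ ⦃u v : V⦄ (p : G.Walk u v), p.IsPath → 2 ≤ p.length → G.Adj u v →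
    ¬ Monochromatic c p

/-- The strong arboricity: least number of colors in a strongly woody edge coloring. -/
noncomputable def strongArboricity {V : Type*} (G : SimpleGraph V) : ℕ :=
  sInf {k | ∃ c : Sym2 V → Fin k, StronglyWoody G c}

/-- An edge coloring is woody if no cycle is monochromatic (each color class is a forest). -/
def Woody {V α : Type*} (G : SimpleGraph V) (c : Sym2 V → α) : Prop :=
  ∀ ⦃u : V⦄ (p : G.Walk u u), p.IsCycle → ¬ Monochromatic c p

/-- The arboricity: least number of colors in a woody edge coloring. -/
noncomputable def arboricity {V : Type*} (G : SimpleGraph V) : ℕ :=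
  sInf {k | ∃ c : Sym2 V → Fin k, Woody G c}

/-- A proper vertex coloring. -/
def ProperColoring {V α : Type*} (G : SimpleGraph V) (f : V → α) : Prop :=
  ∀ ⦃u v : V⦄, G.Adj u v → f u ≠ f v

/-- An acyclic coloring: proper and no cycle uses at most two colors. -/
def AcyclicColoring {V α : Type*} (G : SimpleGraph V) (f : V → α) : Prop :=
  ProperColoring G f ∧
    ∀ ⦃u : V⦄ (p : G.Walk u u), p.IsCycle →
      ¬ ∃ a b, ∀ x ∈ p.support, f x = a ∨ f x = b

/-- The acyclic chromatic number. -/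
noncomputable def acyclicChromaticNumber {V : Type*} (G : SimpleGraph V) : ℕ :=
  sInf {k | ∃ f : V → Fin k, AcyclicColoring G f}

/-- The chromatic number (least number of colors in a proper vertex coloring). -/
noncomputable def chromNum {V : Type*} (G : SimpleGraph V) : ℕ :=
  sInf {k | ∃ f : V → Fin k, ProperColoring G f}

/-- A proper edge coloring: adjacent edges receive distinct colors. -/
def ProperEdgeColoring {V α : Type*} (G : SimpleGraph V) (c : Sym2 V → α) : Prop :=
  ∀ ⦃u v w : V⦄, G.Adj u v → G.Adj v w → u ≠ w → c s(u, v) ≠ c s(v, w)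

/-- The chromatic index: least number of colors in a proper edge coloring. -/
noncomputable def edgeChromNum {V : Type*} (G : SimpleGraph V) : ℕ :=
  sInf {k | ∃ c : Sym2 V → Fin k, ProperEdgeColoring G c}

/-- The 2-arboricity: least number of colors so that every cycle C receives at least
min{|C|, 3} colors. -/
noncomputable def arboricity2 {V : Type*} (G : SimpleGraph V) : ℕ :=
  sInf {k | ∃ c : Sym2 V → Fin k, ∀ ⦃u : V⦄ (p : G.Walk u u), p.IsCycle →
    min p.length 3 ≤ (p.edges.map c).toFinset.card}

/-- `H` is a minor of `G`: there are disjoint nonempty connected branch sets in `G`,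
one for each vertex of `H`, with an edge of `G` between the branch sets of any two
adjacent vertices of `H`. -/
def IsMinorOf {W V : Type*} (H : SimpleGraph W) (G : SimpleGraph V) : Prop :=
  ∃ φ : W → Set V,
    (∀ w, (φ w).Nonempty) ∧
    (∀ w, (G.induce (φ w)).Connected) ∧
    (Pairwise fun w w' => Disjoint (φ w) (φ w')) ∧
    (∀ ⦃w w'⦄, H.Adj w w' → ∃ a ∈ φ w, ∃ b ∈ φ w', G.Adj a b)

/-- Wagner's characterization: planar = no K₅ minor and no K₃,₃ minor. -/
def Planar {V : Type*} (G : SimpleGraph V) : Prop :=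
  ¬ IsMinorOf (completeGraph (Fin 5)) G ∧
    ¬ IsMinorOf (completeBipartiteGraph (Fin 3) (Fin 3)) G

/-- Outerplanar = no K₄ minor and no K₂,₃ minor. -/
def Outerplanar {V : Type*} (G : SimpleGraph V) : Prop :=
  ¬ IsMinorOf (completeGraph (Fin 4)) G ∧
    ¬ IsMinorOf (completeBipartiteGraph (Fin 2) (Fin 3)) G


section AuxiliaryLemmas
variable {V : Type*}

/-- `w` has three distinct neighbors. -/
def ThreeNbrs (G : SimpleGraph V) (w : V) : Prop :=
  ∃ a b c : V, a ≠ b ∧ a ≠ c ∧ b ≠ c ∧ G.Adj w a ∧ G.Adj w b ∧ G.Adj w c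

lemma no_two_cover {α : Type*} {p q r a b : α} (h1 : p ≠ q) (h2 : p ≠ r) (h3 : q ≠ r)
    (hp : p = a ∨ p = b) (hq : q = a ∨ q = b) (hr : r = a ∨ r = b) : False := by
  rcases hp with rfl | rfl <;> rcases hq with rfl | rfl <;> rcases hr with rfl | rfl <;>
    simp_all

/-- Contraction of `v` into `u`: remove `v`, give its neighbors to `u`. -/
def Contract (G : SimpleGraph V) (u v : V) : SimpleGraph {w : V // w ≠ v} where
  Adj a b := (a : V) ≠ (b : V) ∧
    (G.Adj a b ∨ ((a : V) = u ∧ G.Adj v b) ∨ ((b : V) = u ∧ G.Adj v a))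
  symm := by
    constructor
    rintro a b ⟨h1, h2 | ⟨h3, h4⟩ | ⟨h3, h4⟩⟩
    · exact ⟨h1.symm, Or.inl h2.symm⟩
    · exact ⟨h1.symm, Or.inr (Or.inr ⟨h3, h4⟩)⟩
    · exact ⟨h1.symm, Or.inr (Or.inl ⟨h3, h4⟩)⟩
  loopless := by constructor; rintro a ⟨h1, -⟩; exact h1 rfl

lemma contract_adj_of_adj {G : SimpleGraph V} {u v : V} {a b : {w : V // w ≠ v}}
    (h : G.Adj a b) : (Contract G u v).Adj a b :=
  ⟨fun he => G.irrefl (Subtype.coe_injective he ▸ h), Or.inl h⟩variable {V : Type*} {G : SimpleGraph V}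

/-- Lift a walk avoiding `v` to the contraction graph. -/
def Walk.toContract (G : SimpleGraph V) (u v : V) :
    ∀ {a b : V} (p : G.Walk a b) (_ : ∀ x ∈ p.support, x ≠ v)
      (ha : a ≠ v) (hb : b ≠ v), (Contract G u v).Walk ⟨a, ha⟩ ⟨b, hb⟩
  | _, _, SimpleGraph.Walk.nil, _, _, _ => SimpleGraph.Walk.nil
  | a, b, SimpleGraph.Walk.cons h q, hp, ha, hb =>
    SimpleGraph.Walk.cons
      (contract_adj_of_adj (a := ⟨a, ha⟩)
        (b := ⟨_, hp _ (by simp [SimpleGraph.Walk.support_cons])⟩) h)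
      (Walk.toContract G u v q
        (fun x hx => hp x (by simp [SimpleGraph.Walk.support_cons, hx])) _ hb)

lemma Walk.toContract_support (G : SimpleGraph V) (u v : V) :
    ∀ {a b : V} (p : G.Walk a b) (hp : ∀ x ∈ p.support, x ≠ v)
      (ha : a ≠ v) (hb : b ≠ v),
      (Walk.toContract G u v p hp ha hb).support.map Subtype.val = p.support
  | _, _, SimpleGraph.Walk.nil, _, _, _ => by simp [Walk.toContract]
  | a, b, SimpleGraph.Walk.cons h q, hp, ha, hb => by
    simp [Walk.toContract, SimpleGraph.Walk.support_cons,
      Walk.toContract_support G u v q _ _ _]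

lemma Walk.toContract_edges (G : SimpleGraph V) (u v : V) :
    ∀ {a b : V} (p : G.Walk a b) (hp : ∀ x ∈ p.support, x ≠ v)
      (ha : a ≠ v) (hb : b ≠ v),
      (Walk.toContract G u v p hp ha hb).edges.map (Sym2.map Subtype.val) = p.edges
  | _, _, SimpleGraph.Walk.nil, _, _, _ => by simp [Walk.toContract]
  | a, b, SimpleGraph.Walk.cons h q, hp, ha, hb => by
    simp [Walk.toContract, SimpleGraph.Walk.edges_cons,
      Walk.toContract_edges G u v q _ _ _]

lemma Walk.toContract_isCycle (G : SimpleGraph V) (u v : V)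
    {a : V} (p : G.Walk a a) (hp : ∀ x ∈ p.support, x ≠ v) (ha : a ≠ v)
    (hc : p.IsCycle) : (Walk.toContract G u v p hp ha ha).IsCycle := by
  set q := Walk.toContract G u v p hp ha ha with hq
  have hsupp := Walk.toContract_support G u v p hp ha ha
  have hedg := Walk.toContract_edges G u v p hp ha ha
  refine ⟨⟨⟨?_⟩, ?_⟩, ?_⟩
  · have := hc.isTrail.edges_nodup
    rw [← hedg] at this
    exact this.of_map
  · intro hnil
    have := congrArg SimpleGraph.Walk.length hnil
    have hlen : q.edges.length = p.edges.length := by rw [← hedg, List.length_map]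
    simp only [SimpleGraph.Walk.length_nil] at this
    have h3 := hc.three_le_length
    rw [← SimpleGraph.Walk.length_edges, hlen, SimpleGraph.Walk.length_edges] at this
    omega
  · have := hc.support_nodup
    have htail : q.support.tail.map Subtype.val = p.support.tail := by
      rw [← hsupp, List.map_tail]
    rw [← htail] at this
    exact this.of_map
lemma reach_induce_of_walk {s : Set V} :
    ∀ {a b : V} (p : G.Walk a b) (_ : ∀ x ∈ p.support, x ∈ s)
      (ha : a ∈ s) (hb : b ∈ s), (G.induce s).Reachable ⟨a, ha⟩ ⟨b, hb⟩
  | _, _, SimpleGraph.Walk.nil, _, _, _ => Reachable.refl _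
  | a, b, SimpleGraph.Walk.cons h q, hp, ha, hb => by
    have hm : q.support.head (by simp) ∈ s := by
      refine hp _ ?_
      simp [SimpleGraph.Walk.support_cons]
    refine Reachable.trans ?_
      (reach_induce_of_walk q (fun x hx => hp x (by simp [SimpleGraph.Walk.support_cons, hx]))
        (hp _ (by simp [SimpleGraph.Walk.support_cons])) hb)
    exact Adj.reachable (by exact h)

/-- Reachability avoiding a forbidden set. -/
def AReach (G : SimpleGraph V) (T : Set V) (a b : V) : Prop :=
  ∃ p : G.Walk a b, ∀ x ∈ p.support, x ∉ T

lemma AReach.refl {T : Set V} {a : V} (ha : a ∉ T) : AReach G T a a :=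
  ⟨SimpleGraph.Walk.nil, by simpa using ha⟩

lemma AReach.symm {T : Set V} {a b : V} (h : AReach G T a b) : AReach G T b a := by
  obtain ⟨p, hp⟩ := h
  exact ⟨p.reverse, fun x hx => hp x (by simpa [SimpleGraph.Walk.support_reverse] using hx)⟩

lemma AReach.trans {T : Set V} {a b c : V} (h : AReach G T a b) (h' : AReach G T b c) :
    AReach G T a c := by
  obtain ⟨p, hp⟩ := h; obtain ⟨q, hq⟩ := h'
  refine ⟨p.append q, fun x hx => ?_⟩
  rw [SimpleGraph.Walk.mem_support_append_iff] at hx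
  rcases hx with hx | hx
  · exact hp x hx
  · exact hq x hx

lemma AReach.left_notMem {T : Set V} {a b : V} (h : AReach G T a b) : a ∉ T := by
  obtain ⟨p, hp⟩ := h; exact hp a p.start_mem_support

lemma AReach.right_notMem {T : Set V} {a b : V} (h : AReach G T a b) : b ∉ T := by
  obtain ⟨p, hp⟩ := h; exact hp b p.end_mem_support

lemma AReach.adj {T : Set V} {a b : V} (ha : a ∉ T) (hb : b ∉ T) (h : G.Adj a b) :
    AReach G T a b := by
  refine ⟨SimpleGraph.Walk.cons h SimpleGraph.Walk.nil, ?_⟩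
  intro x hx
  simp only [SimpleGraph.Walk.support_cons, SimpleGraph.Walk.support_nil,
    List.mem_cons, List.mem_singleton, List.not_mem_nil, or_false] at hx
  rcases hx with rfl | rfl
  · exact ha
  · exact hb

lemma AReach.mem_support {T : Set V} :
    ∀ {a b : V} (p : G.Walk a b) (_ : ∀ x ∈ p.support, x ∉ T) {x : V},
      x ∈ p.support → AReach G T a x
  | _, _, SimpleGraph.Walk.nil, hp, x, hx => by
    simp only [SimpleGraph.Walk.support_nil, List.mem_singleton] at hx
    subst hx; exact AReach.refl (hp _ (by simp))
  | a, b, SimpleGraph.Walk.cons h q, hp, x, hx => by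
    simp only [SimpleGraph.Walk.support_cons, List.mem_cons] at hx
    have hq : ∀ y ∈ q.support, y ∉ T :=
      fun y hy => hp y (by simp [SimpleGraph.Walk.support_cons, hy])
    rcases hx with rfl | hx
    · exact AReach.refl (hp _ (by simp))
    · exact AReach.trans
        (AReach.adj (hp _ (by simp)) (hq _ q.start_mem_support) h)
        (AReach.mem_support q hq hx)

/-- The component of `q` in `G` minus `T` induces a connected subgraph. -/
lemma AReach_component_connected {T : Set V} {q : V} (hq : q ∉ T) :
    (G.induce {b | AReach G T q b}).Connected := by
  rw [connected_iff]
  constructor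
  · rintro ⟨x, hx⟩ ⟨y, hy⟩
    obtain ⟨p, hp⟩ := AReach.trans (AReach.symm hx) hy
    exact reach_induce_of_walk p
      (fun z hz => AReach.trans hx (AReach.mem_support p hp hz)) hx hy
  · exact ⟨⟨q, AReach.refl hq⟩⟩

lemma induce_singleton_connected (G : SimpleGraph V) (x : V) :
    (G.induce {x}).Connected := by
  rw [connected_iff]
  refine ⟨?_, ⟨⟨x, rfl⟩⟩⟩
  rintro ⟨a, rfl⟩ ⟨b, rfl⟩
  rfl
lemma reach_of_walk {X Y : Type*} {B : SimpleGraph X} {C : SimpleGraph Y} (F : X → Y)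
    (h : ∀ a b, B.Adj a b → C.Reachable (F a) (F b)) :
    ∀ {x y : X}, B.Walk x y → C.Reachable (F x) (F y)
  | _, _, SimpleGraph.Walk.nil => Reachable.refl _
  | x, y, SimpleGraph.Walk.cons ha q => (h _ _ ha).trans (reach_of_walk F h q)

lemma isMinorOf_induce {W : Type*} {H : SimpleGraph W} {s : Set V}
    (h : IsMinorOf H (G.induce s)) : IsMinorOf H G := by
  obtain ⟨φ, hne, hconn, hdisj, hadj⟩ := h
  refine ⟨fun w => Subtype.val '' φ w, fun w => (hne w).image _, ?_, ?_, ?_⟩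
  · intro w
    rw [connected_iff]
    constructor
    · rintro ⟨a, x, hx, rfl⟩ ⟨b, y, hy, rfl⟩
      obtain ⟨q⟩ := (hconn w).preconnected ⟨x, hx⟩ ⟨y, hy⟩
      refine reach_of_walk
        (fun z : ↥(φ w) => (⟨z.1.1, ⟨z.1, z.2, rfl⟩⟩ : ↥(Subtype.val '' φ w)))
        (fun a b hab => Adj.reachable ?_) q
      exact hab
    · obtain ⟨x, hx⟩ := hne w
      exact ⟨⟨x.1, x, hx, rfl⟩⟩
  · intro w w' hww'
    simp only [Set.disjoint_image_iff Subtype.val_injective]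
    exact hdisj hww'
  · intro w w' hww'
    obtain ⟨a, ha, b, hb, hab⟩ := hadj hww'
    exact ⟨a.1, ⟨a, ha, rfl⟩, b.1, ⟨b, hb, rfl⟩, hab⟩

lemma isMinorOf_contract {W : Type*} {H : SimpleGraph W} {u v : V} (huv : G.Adj u v)
    (h : IsMinorOf H (Contract G u v)) : IsMinorOf H G := by
  have hu : u ≠ v := huv.ne
  obtain ⟨φ, hne, hconn, hdisj, hadj⟩ := h
  set ψ : W → Set V :=
    fun w => Subtype.val '' φ w ∪ {x | x = v ∧ ⟨u, hu⟩ ∈ φ w} with hψ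
  have hmem : ∀ w (z : {w : V // w ≠ v}), z ∈ φ w → (z : V) ∈ ψ w :=
    fun w z hz => Or.inl ⟨z, hz, rfl⟩
  have hvmem : ∀ w, ⟨u, hu⟩ ∈ φ w → v ∈ ψ w := fun w h' => Or.inr ⟨rfl, h'⟩
  refine ⟨ψ, fun w => ((hne w).image _).mono Set.subset_union_left, ?_, ?_, ?_⟩
  · intro w
    rw [connected_iff]
    constructor
    · have key : ∀ (x y : ↥(φ w)),
          (G.induce (ψ w)).Reachable ⟨x.1.1, hmem w x.1 x.2⟩ ⟨y.1.1, hmem w y.1 y.2⟩ := by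
        intro x y
        obtain ⟨q⟩ := (hconn w).preconnected x y
        refine reach_of_walk (fun z : ↥(φ w) => (⟨z.1.1, hmem w z.1 z.2⟩ : ↥(ψ w))) ?_ q
        rintro a b ⟨hne', hcase | ⟨hau, hvb⟩ | ⟨hbu, hva⟩⟩
        · exact Adj.reachable (by exact hcase)
        · have haφ : (⟨u, hu⟩ : {w : V // w ≠ v}) ∈ φ w := by
            have : a.1 = ⟨u, hu⟩ := Subtype.ext hau
            exact this ▸ a.2
          have hvψ : v ∈ ψ w := hvmem w haφ
          refine Reachable.trans (Adj.reachable (v := ⟨v, hvψ⟩) ?_) (Adj.reachable ?_)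
          · show G.Adj a.1.1 v
            have h0 := huv; rwa [← hau] at h0
          · show G.Adj v b.1.1; exact hvb
        · have hbφ : (⟨u, hu⟩ : {w : V // w ≠ v}) ∈ φ w := by
            have : b.1 = ⟨u, hu⟩ := Subtype.ext hbu
            exact this ▸ b.2
          have hvψ : v ∈ ψ w := hvmem w hbφ
          refine Reachable.trans (Adj.reachable (v := ⟨v, hvψ⟩) ?_) (Adj.reachable ?_)
          · show G.Adj a.1.1 v; exact hva.symm
          · show G.Adj v b.1.1
            have h0 := huv.symm; rwa [← hbu] at h0
      rintro ⟨a, ha⟩ ⟨b, hb⟩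
      rcases ha with ⟨x, hx, rfl⟩ | ⟨rfl, hx⟩ <;> rcases hb with ⟨y, hy, rfl⟩ | ⟨rfl, hy⟩
      · exact key ⟨x, hx⟩ ⟨y, hy⟩
      · exact Reachable.trans (key ⟨x, hx⟩ ⟨⟨u, hu⟩, hy⟩)
          (Adj.reachable (by show G.Adj u _; exact huv))
      · exact Reachable.trans
          (Adj.reachable (by show G.Adj _ u; exact huv.symm)) (key ⟨⟨u, hu⟩, hx⟩ ⟨y, hy⟩)
      · exact Reachable.refl _
    · obtain ⟨x, hx⟩ := hne w
      exact ⟨⟨x.1, hmem w x hx⟩⟩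
  · intro w w' hww'
    rw [Set.disjoint_left]
    rintro x (⟨a, ha, rfl⟩ | ⟨rfl, ha⟩) (⟨b, hb, hba⟩ | ⟨hxv, hb⟩)
    · have : b = a := Subtype.coe_injective hba
      exact (hdisj hww').le_bot ⟨ha, this ▸ hb⟩
    · exact a.2 hxv
    · exact b.2 hba
    · exact (hdisj hww').le_bot ⟨ha, hb⟩
  · intro w w' hww'
    obtain ⟨a, ha, b, hb, hne', hcase | ⟨hau, hvb⟩ | ⟨hbu, hva⟩⟩ := hadj hww'
    · exact ⟨a.1, hmem w a ha, b.1, hmem w' b hb, hcase⟩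
    · refine ⟨v, hvmem w ?_, b.1, hmem w' b hb, hvb⟩
      have : a = ⟨u, hu⟩ := Subtype.ext hau
      exact this ▸ ha
    · refine ⟨a.1, hmem w a ha, v, hvmem w' ?_, hva.symm⟩
      have : b = ⟨u, hu⟩ := Subtype.ext hbu
      exact this ▸ hb

lemma isMinorOf_contract_isolated {W : Type*} {H : SimpleGraph W} {u v : V} (hu : u ≠ v)
    (hv : ∀ b, ¬ G.Adj v b)
    (h : IsMinorOf H (Contract G u v)) : IsMinorOf H G := by
  obtain ⟨φ, hne, hconn, hdisj, hadj⟩ := h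
  have hadj' : ∀ (a b : {w : V // w ≠ v}), (Contract G u v).Adj a b → G.Adj a.1 b.1 := by
    rintro a b ⟨hne', hcase | ⟨hau, hvb⟩ | ⟨hbu, hva⟩⟩
    · exact hcase
    · exact absurd hvb (hv _)
    · exact absurd hva (hv _)
  refine ⟨fun w => Subtype.val '' φ w, fun w => (hne w).image _, ?_, ?_, ?_⟩
  · intro w
    rw [connected_iff]
    constructor
    · rintro ⟨a, x, hx, rfl⟩ ⟨b, y, hy, rfl⟩
      obtain ⟨q⟩ := (hconn w).preconnected ⟨x, hx⟩ ⟨y, hy⟩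
      refine reach_of_walk
        (fun z : ↥(φ w) => (⟨z.1.1, ⟨z.1, z.2, rfl⟩⟩ : ↥(Subtype.val '' φ w)))
        (fun a b hab => Adj.reachable ?_) q
      exact hadj' _ _ hab
    · obtain ⟨x, hx⟩ := hne w
      exact ⟨⟨x.1, x, hx, rfl⟩⟩
  · intro w w' hww'
    simp only [Set.disjoint_image_iff Subtype.coe_injective]
    exact hdisj hww'
  · intro w w' hww'
    obtain ⟨a, ha, b, hb, hab⟩ := hadj hww'
    exact ⟨a.1, ⟨a, ha, rfl⟩, b.1, ⟨b, hb, rfl⟩, hadj' _ _ hab⟩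

lemma isMinorOf_K4 {v u p : V} (hvu : G.Adj v u) (hvp : G.Adj v p) (hup : G.Adj u p)
    {C : Set V} (hconn : (G.induce C).Connected)
    (hv : v ∉ C) (hu : u ∉ C) (hp : p ∉ C)
    (hav : ∃ c ∈ C, G.Adj v c) (hau : ∃ c ∈ C, G.Adj u c) (hap : ∃ c ∈ C, G.Adj p c) :
    IsMinorOf (completeGraph (Fin 4)) G := by
  obtain ⟨cv, hcv, hcva⟩ := hav
  obtain ⟨cu, hcu, hcua⟩ := hau
  obtain ⟨cp, hcp, hcpa⟩ := hap
  refine ⟨![{v}, {u}, {p}, C], ?_, ?_, ?_, ?_⟩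
  · intro w
    fin_cases w
    · exact ⟨v, rfl⟩
    · exact ⟨u, rfl⟩
    · exact ⟨p, rfl⟩
    · exact ⟨cv, hcv⟩
  · intro w
    fin_cases w
    · exact induce_singleton_connected G v
    · exact induce_singleton_connected G u
    · exact induce_singleton_connected G p
    · exact hconn
  · intro i j hij
    fin_cases i <;> fin_cases j <;>
      first
        | exact absurd rfl hij
        | exact (Set.disjoint_singleton.mpr hvu.ne : Disjoint ({v} : Set V) {u})
        | exact (Set.disjoint_singleton.mpr hvu.ne' : Disjoint ({u} : Set V) {v})
        | exact (Set.disjoint_singleton.mpr hvp.ne : Disjoint ({v} : Set V) {p})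
        | exact (Set.disjoint_singleton.mpr hvp.ne' : Disjoint ({p} : Set V) {v})
        | exact (Set.disjoint_singleton.mpr hup.ne : Disjoint ({u} : Set V) {p})
        | exact (Set.disjoint_singleton.mpr hup.ne' : Disjoint ({p} : Set V) {u})
        | exact (Set.disjoint_singleton_left.mpr hv : Disjoint ({v} : Set V) C)
        | exact (Set.disjoint_singleton_left.mpr hu : Disjoint ({u} : Set V) C)
        | exact (Set.disjoint_singleton_left.mpr hp : Disjoint ({p} : Set V) C)
        | exact (Set.disjoint_singleton_right.mpr hv : Disjoint C ({v} : Set V))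
        | exact (Set.disjoint_singleton_right.mpr hu : Disjoint C ({u} : Set V))
        | exact (Set.disjoint_singleton_right.mpr hp : Disjoint C ({p} : Set V))
  · intro w w' hww'
    have hne : w ≠ w' := by simpa [completeGraph] using hww'
    fin_cases w <;> fin_cases w' <;>
      first
        | exact absurd rfl hne
        | exact ⟨v, rfl, u, rfl, hvu⟩
        | exact ⟨u, rfl, v, rfl, hvu.symm⟩
        | exact ⟨v, rfl, p, rfl, hvp⟩
        | exact ⟨p, rfl, v, rfl, hvp.symm⟩
        | exact ⟨u, rfl, p, rfl, hup⟩
        | exact ⟨p, rfl, u, rfl, hup.symm⟩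
        | exact ⟨v, rfl, cv, hcv, hcva⟩
        | exact ⟨cv, hcv, v, rfl, hcva.symm⟩
        | exact ⟨u, rfl, cu, hcu, hcua⟩
        | exact ⟨cu, hcu, u, rfl, hcua.symm⟩
        | exact ⟨p, rfl, cp, hcp, hcpa⟩
        | exact ⟨cp, hcp, p, rfl, hcpa.symm⟩

universe u

/-- Applying the induction hypothesis to an induced subgraph. -/
lemma deg3_step {V : Type u} [Fintype V] {G : SimpleGraph V} {n : ℕ}
    (IH : ∀ (V' : Type u) [Fintype V'] (G' : SimpleGraph V'), Fintype.card V' ≤ n →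
        ∀ x₀ y₀ : V', (x₀ = y₀ ∨ G'.Adj x₀ y₀) →
        (∀ w, w ≠ x₀ → w ≠ y₀ → ThreeNbrs G' w) →
        (∃ w, w ≠ x₀ ∧ w ≠ y₀) → IsMinorOf (completeGraph (Fin 4)) G')
    (hcard : Fintype.card V ≤ n + 1)
    (U : Set V) (x₀' y₀' : V) (hx : x₀' ∈ U) (hy : y₀' ∈ U)
    (hxy : x₀' = y₀' ∨ G.Adj x₀' y₀')
    (h3 : ∀ c ∈ U, c ≠ x₀' → c ≠ y₀' →
      ∃ a b d, a ≠ b ∧ a ≠ d ∧ b ≠ d ∧ a ∈ U ∧ b ∈ U ∧ d ∈ U ∧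
        G.Adj c a ∧ G.Adj c b ∧ G.Adj c d)
    (hint : ∃ c ∈ U, c ≠ x₀' ∧ c ≠ y₀')
    (hm : ∃ m, m ∉ U) : IsMinorOf (completeGraph (Fin 4)) G := by
  apply isMinorOf_induce (s := U)
  letI : Fintype ↥U := Set.Finite.fintype (Set.toFinite U)
  obtain ⟨m, hmU⟩ := hm
  have hcard' : Fintype.card ↥U ≤ n := by
    have hlt : Fintype.card ↥U < Fintype.card V := by
      refine Fintype.card_lt_of_injective_of_notMem Subtype.val Subtype.coe_injective
        (b := m) ?_
      rintro ⟨⟨z, hz⟩, rfl⟩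
      exact hmU hz
    omega
  refine IH ↥U (G.induce U) hcard' ⟨x₀', hx⟩ ⟨y₀', hy⟩ ?_ ?_ ?_
  · rcases hxy with rfl | hadj
    · exact Or.inl rfl
    · exact Or.inr (by exact hadj)
  · rintro ⟨w, hw⟩ h1 h2
    obtain ⟨a, b, d, hab, had, hbd, haU, hbU, hdU, ha, hb, hd⟩ :=
      h3 w hw (fun h => h1 (Subtype.ext h)) (fun h => h2 (Subtype.ext h))
    exact ⟨⟨a, haU⟩, ⟨b, hbU⟩, ⟨d, hdU⟩,
      fun h => hab (congrArg Subtype.val h),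
      fun h => had (congrArg Subtype.val h),
      fun h => hbd (congrArg Subtype.val h),
      by exact ha, by exact hb, by exact hd⟩
  · obtain ⟨c, hcU, hc1, hc2⟩ := hint
    exact ⟨⟨c, hcU⟩, fun h => hc1 (congrArg Subtype.val h),
      fun h => hc2 (congrArg Subtype.val h)⟩

/-- Every finite graph in which all vertices except possibly two adjacent (or equal)
special vertices have three distinct neighbors, and which has at least one
non-special vertex, contains a `K₄` minor. -/
lemma deg3_K4 : ∀ (n : ℕ) (V : Type u) [Fintype V] (G : SimpleGraph V),
    Fintype.card V ≤ n →
    ∀ x₀ y₀ : V, (x₀ = y₀ ∨ G.Adj x₀ y₀) →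
    (∀ w, w ≠ x₀ → w ≠ y₀ → ThreeNbrs G w) →
    (∃ w, w ≠ x₀ ∧ w ≠ y₀) →
    IsMinorOf (completeGraph (Fin 4)) G := by
  intro n
  induction n with
  | zero =>
    intro V _ G hcard x₀ y₀ _ _ hw
    obtain ⟨w, -, -⟩ := hw
    exact ((Fintype.card_eq_zero_iff.mp (Nat.le_zero.mp hcard)).elim w)
  | succ n IH =>
    intro V _ G hcard x₀ y₀ hxy hdeg hex
    classical
    obtain ⟨v0, hv0x, hv0y⟩ := hex
    by_cases htri : ∃ v u p, (v ≠ x₀ ∧ v ≠ y₀) ∧ G.Adj v u ∧ G.Adj v p ∧ G.Adj u p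
    · -- triangle case
      obtain ⟨v, u, p, ⟨hvx, hvy⟩, hvu, hvp, hup⟩ := htri
      set Tset : Set V := {v, u, p} with hTdef
      have hmemT : ∀ z, z ∈ Tset ↔ z = v ∨ z = u ∨ z = p := by
        intro z; simp [hTdef]
      have hvT : v ∈ Tset := (hmemT v).mpr (Or.inl rfl)
      have huT : u ∈ Tset := (hmemT u).mpr (Or.inr (Or.inl rfl))
      have hpT : p ∈ Tset := (hmemT p).mpr (Or.inr (Or.inr rfl))
      have hq0 : ∃ q, q ∉ Tset ∧ G.Adj v q := by
        obtain ⟨a, b, c, hab, hac, hbc, ha, hb, hc⟩ := hdeg v hvx hvy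
        by_cases hau : a ≠ u ∧ a ≠ p
        · exact ⟨a, fun hm => by
            rcases (hmemT a).mp hm with rfl | rfl | rfl
            exacts [ha.ne rfl, hau.1 rfl, hau.2 rfl], ha⟩
        · by_cases hbu : b ≠ u ∧ b ≠ p
          · exact ⟨b, fun hm => by
              rcases (hmemT b).mp hm with rfl | rfl | rfl
              exacts [hb.ne rfl, hbu.1 rfl, hbu.2 rfl], hb⟩
          · rw [not_and_or, not_ne_iff, not_ne_iff] at hau hbu
            have hcu : c ≠ u ∧ c ≠ p := by
              rcases hau with rfl | rfl <;> rcases hbu with rfl | rfl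
              · exact absurd rfl hab
              · exact ⟨fun h => hac h.symm, fun h => hbc h.symm⟩
              · exact ⟨fun h => hbc h.symm, fun h => hac h.symm⟩
              · exact absurd rfl hab
            exact ⟨c, fun hm => by
              rcases (hmemT c).mp hm with rfl | rfl | rfl
              exacts [hc.ne rfl, hcu.1 rfl, hcu.2 rfl], hc⟩
      by_cases hall : ∃ q, q ∉ Tset ∧ (∃ c, AReach G Tset q c ∧ G.Adj v c) ∧
          (∃ c, AReach G Tset q c ∧ G.Adj u c) ∧ (∃ c, AReach G Tset q c ∧ G.Adj p c)
      · obtain ⟨q, hqT, ⟨cv, hcv, hcva⟩, ⟨cu, hcu, hcua⟩, ⟨cp, hcp, hcpa⟩⟩ := hall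
        refine isMinorOf_K4 hvu hvp hup (C := {b | AReach G Tset q b})
          (AReach_component_connected hqT) ?_ ?_ ?_
          ⟨cv, hcv, hcva⟩ ⟨cu, hcu, hcua⟩ ⟨cp, hcp, hcpa⟩
        · exact fun h => (AReach.right_notMem h) hvT
        · exact fun h => (AReach.right_notMem h) huT
        · exact fun h => (AReach.right_notMem h) hpT
      · obtain ⟨q0, hq0T, hq0adj⟩ := hq0
        -- find a component avoiding the special vertices
        have hclean : ∃ q, q ∉ Tset ∧ ¬ AReach G Tset q x₀ ∧ ¬ AReach G Tset q y₀ := by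
          by_cases hqx : AReach G Tset q0 x₀ ∨ AReach G Tset q0 y₀
          · have hspec : ∀ s, (s = x₀ ∨ s = y₀) → s ∈ Tset ∨ AReach G Tset q0 s := by
              intro s hs
              by_cases hsT : s ∈ Tset
              · exact Or.inl hsT
              · refine Or.inr ?_
                rcases hqx with h | h <;> rcases hs with rfl | rfl
                · exact h
                · rcases hxy with rfl | hadj
                  · exact h
                  · exact h.trans (AReach.adj h.right_notMem hsT hadj)
                · rcases hxy with rfl | hadj
                  · exact h
                  · exact h.trans (AReach.adj h.right_notMem hsT hadj.symm)
                · exact h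
            by_cases hB1 : ∃ q', q' ∉ Tset ∧ ¬ AReach G Tset q0 q'
            · obtain ⟨q', hq'T, hq'R⟩ := hB1
              refine ⟨q', hq'T, ?_, ?_⟩
              · intro h
                rcases hspec x₀ (Or.inl rfl) with hT | hR
                · exact (AReach.right_notMem h) hT
                · exact hq'R (hR.trans h.symm)
              · intro h
                rcases hspec y₀ (Or.inr rfl) with hT | hR
                · exact (AReach.right_notMem h) hT
                · exact hq'R (hR.trans h.symm)
            · push_neg at hB1
              -- every non-triangle vertex is in the component of q0;
              -- the non-attached triangle vertex is special, so both specials are in Tset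
              have hmissing : ∃ t, t ∈ Tset ∧ ¬ (∃ c, AReach G Tset q0 c ∧ G.Adj t c) := by
                by_contra hcon
                push_neg at hcon
                exact hall ⟨q0, hq0T, hcon v hvT, hcon u huT, hcon p hpT⟩
              obtain ⟨t, htT, htA⟩ := hmissing
              have htnbr : ∀ z, G.Adj t z → z ∈ Tset := by
                intro z hz
                by_contra hzT
                exact htA ⟨z, hB1 z hzT, hz⟩
              have ht3 : ¬ ThreeNbrs G t := by
                rintro ⟨a, b, c, hab, hac, hbc, ha, hb, hc⟩
                -- a, b, c ∈ Tset \ {t} which has two elements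
                have hmem : ∀ z, G.Adj t z → (z = v ∨ z = u ∨ z = p) ∧ z ≠ t :=
                  fun z hz => ⟨(hmemT z).mp (htnbr z hz), fun h => G.irrefl (h ▸ hz)⟩
                rcases (hmemT t).mp htT with rfl | rfl | rfl
                · exact no_two_cover hab hac hbc
                    (((hmem a ha).1.resolve_left (hmem a ha).2))
                    (((hmem b hb).1.resolve_left (hmem b hb).2))
                    (((hmem c hc).1.resolve_left (hmem c hc).2))
                · refine no_two_cover (a := v) (b := p) hab hac hbc ?_ ?_ ?_
                  · rcases (hmem a ha).1 with h | h | h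
                    exacts [Or.inl h, absurd h (hmem a ha).2, Or.inr h]
                  · rcases (hmem b hb).1 with h | h | h
                    exacts [Or.inl h, absurd h (hmem b hb).2, Or.inr h]
                  · rcases (hmem c hc).1 with h | h | h
                    exacts [Or.inl h, absurd h (hmem c hc).2, Or.inr h]
                · refine no_two_cover (a := v) (b := u) hab hac hbc ?_ ?_ ?_
                  · rcases (hmem a ha).1 with h | h | h
                    exacts [Or.inl h, Or.inr h, absurd h (hmem a ha).2]
                  · rcases (hmem b hb).1 with h | h | h
                    exacts [Or.inl h, Or.inr h, absurd h (hmem b hb).2]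
                  · rcases (hmem c hc).1 with h | h | h
                    exacts [Or.inl h, Or.inr h, absurd h (hmem c hc).2]
              have htsp : t = x₀ ∨ t = y₀ := by
                by_contra hcon
                push_neg at hcon
                exact ht3 (hdeg t hcon.1 hcon.2)
              have hxT : x₀ ∈ Tset ∧ y₀ ∈ Tset := by
                rcases htsp with rfl | rfl
                · refine ⟨htT, ?_⟩
                  rcases hxy with rfl | hadj
                  · exact htT
                  · exact htnbr y₀ hadj
                · refine ⟨?_, htT⟩
                  rcases hxy with rfl | hadj
                  · exact htT
                  · exact htnbr x₀ hadj.symm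
              exact ⟨q0, hq0T,
                fun h => (AReach.right_notMem h) hxT.1,
                fun h => (AReach.right_notMem h) hxT.2⟩
          · push_neg at hqx
            exact ⟨q0, hq0T, hqx.1, hqx.2⟩
        obtain ⟨q, hqT, hqx₀, hqy₀⟩ := hclean
        set C : Set V := {b | AReach G Tset q b} with hCdef
        have hqC : q ∈ C := AReach.refl hqT
        have hCT : ∀ z ∈ C, z ∉ Tset := fun z hz => AReach.right_notMem hz
        have hCx₀ : ∀ z ∈ C, z ≠ x₀ := fun z hz h => hqx₀ (h ▸ hz)
        have hCy₀ : ∀ z ∈ C, z ≠ y₀ := fun z hz h => hqy₀ (h ▸ hz)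
        have hqx' : q ≠ x₀ := hCx₀ q hqC
        have hqy' : q ≠ y₀ := hCy₀ q hqC
        have hCclose : ∀ c ∈ C, ∀ z, G.Adj c z → z ∉ Tset → z ∈ C :=
          fun c hc z hadj hzT => hc.trans (AReach.adj (hCT c hc) hzT hadj)
        have hU3core : ∀ c ∈ C, ∀ z, G.Adj c z →
            z ∈ C ∨ (z ∈ Tset ∧ ∃ c', AReach G Tset q c' ∧ G.Adj z c') := by
          intro c hc z hadj
          by_cases hzT : z ∈ Tset
          · exact Or.inr ⟨hzT, ⟨c, hc, hadj.symm⟩⟩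
          · exact Or.inl (hCclose c hc z hadj hzT)
        -- common recursion step
        have step2 : ∀ t1 t2 : V, (t1 = t2 ∨ G.Adj t1 t2) →
            (∀ z ∈ Tset, (∃ c', AReach G Tset q c' ∧ G.Adj z c') → z = t1 ∨ z = t2) →
            (∃ m ∈ Tset, m ≠ t1 ∧ m ≠ t2) →
            (∃ c ∈ C, c ≠ t1 ∧ c ≠ t2) →
            IsMinorOf (completeGraph (Fin 4)) G := by
          intro t1 t2 h12 hattach hmiss hint'
          refine deg3_step IH hcard (C ∪ {t1, t2}) t1 t2
            (Set.mem_union_right _ (by simp)) (Set.mem_union_right _ (by simp)) h12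
            ?_ ?_ ?_
          · intro c hc hc1 hc2
            have hcC : c ∈ C := by
              rcases hc with hc | hc
              · exact hc
              · rcases hc with rfl | rfl
                · exact absurd rfl hc1
                · exact absurd rfl hc2
            obtain ⟨a, b, d, hab, had, hbd, ha, hb, hd⟩ :=
              hdeg c (hCx₀ c hcC) (hCy₀ c hcC)
            have hmemU : ∀ z, G.Adj c z → z ∈ C ∪ {t1, t2} := by
              intro z hz
              rcases hU3core c hcC z hz with h | ⟨hzT, hzA⟩
              · exact Or.inl h
              · rcases hattach z hzT hzA with rfl | rfl
                · exact Or.inr (by simp)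
                · exact Or.inr (by simp)
            exact ⟨a, b, d, hab, had, hbd, hmemU a ha, hmemU b hb, hmemU d hd,
              ha, hb, hd⟩
          · obtain ⟨c, hcC, h1, h2⟩ := hint'
            exact ⟨c, Or.inl hcC, h1, h2⟩
          · obtain ⟨m, hmT, hm1, hm2⟩ := hmiss
            refine ⟨m, ?_⟩
            rintro (hmC | hm12)
            · exact hCT m hmC hmT
            · rcases hm12 with rfl | rfl
              · exact hm1 rfl
              · exact hm2 rfl
        have hattach_contra : ∀ z, ¬ (∃ c', AReach G Tset q c' ∧ G.Adj z c') →
            ∀ t1 t2 : V, z ≠ t1 → z ≠ t2 → True := fun _ _ _ _ _ _ => trivial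
        by_cases hAv : ∃ c', AReach G Tset q c' ∧ G.Adj v c'
        · by_cases hAu : ∃ c', AReach G Tset q c' ∧ G.Adj u c'
          · -- p not attached (else hall)
            have hAp : ¬ ∃ c', AReach G Tset q c' ∧ G.Adj p c' :=
              fun hAp => hall ⟨q, hqT, hAv, hAu, hAp⟩
            refine step2 v u (Or.inr hvu) ?_ ⟨p, hpT, hvp.ne', hup.ne'⟩
              ⟨q, hqC, fun h => hqT (h ▸ hvT), fun h => hqT (h ▸ huT)⟩
            intro z hzT hzA
            rcases (hmemT z).mp hzT with rfl | rfl | rfl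
            · exact Or.inl rfl
            · exact Or.inr rfl
            · exact absurd hzA hAp
          · by_cases hAp : ∃ c', AReach G Tset q c' ∧ G.Adj p c'
            · refine step2 v p (Or.inr hvp) ?_ ⟨u, huT, hvu.ne', hup.ne⟩
                ⟨q, hqC, fun h => hqT (h ▸ hvT), fun h => hqT (h ▸ hpT)⟩
              intro z hzT hzA
              rcases (hmemT z).mp hzT with rfl | rfl | rfl
              · exact Or.inl rfl
              · exact absurd hzA hAu
              · exact Or.inr rfl
            · refine step2 v v (Or.inl rfl) ?_ ⟨u, huT, hvu.ne', hvu.ne'⟩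
                ⟨q, hqC, fun h => hqT (h ▸ hvT), fun h => hqT (h ▸ hvT)⟩
              intro z hzT hzA
              rcases (hmemT z).mp hzT with rfl | rfl | rfl
              · exact Or.inl rfl
              · exact absurd hzA hAu
              · exact absurd hzA hAp
        · by_cases hAu : ∃ c', AReach G Tset q c' ∧ G.Adj u c'
          · by_cases hAp : ∃ c', AReach G Tset q c' ∧ G.Adj p c'
            · refine step2 u p (Or.inr hup) ?_ ⟨v, hvT, hvu.ne, hvp.ne⟩
                ⟨q, hqC, fun h => hqT (h ▸ huT), fun h => hqT (h ▸ hpT)⟩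
              intro z hzT hzA
              rcases (hmemT z).mp hzT with rfl | rfl | rfl
              · exact absurd hzA hAv
              · exact Or.inl rfl
              · exact Or.inr rfl
            · refine step2 u u (Or.inl rfl) ?_ ⟨v, hvT, hvu.ne, hvu.ne⟩
                ⟨q, hqC, fun h => hqT (h ▸ huT), fun h => hqT (h ▸ huT)⟩
              intro z hzT hzA
              rcases (hmemT z).mp hzT with rfl | rfl | rfl
              · exact absurd hzA hAv
              · exact Or.inl rfl
              · exact absurd hzA hAp
          · by_cases hAp : ∃ c', AReach G Tset q c' ∧ G.Adj p c'
            · refine step2 p p (Or.inl rfl) ?_ ⟨v, hvT, hvp.ne, hvp.ne⟩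
                ⟨q, hqC, fun h => hqT (h ▸ hpT), fun h => hqT (h ▸ hpT)⟩
              intro z hzT hzA
              rcases (hmemT z).mp hzT with rfl | rfl | rfl
              · exact absurd hzA hAv
              · exact absurd hzA hAu
              · exact Or.inl rfl
            · -- no attachments at all: component with special q,q
              have hq3 := hdeg q hqx' hqy'
              obtain ⟨a, b, d, hab, had, hbd, ha, hb, hd⟩ := hq3
              have haC : a ∈ C := by
                rcases hU3core q hqC a ha with h | ⟨hzT, hzA⟩
                · exact h
                · rcases (hmemT a).mp hzT with rfl | rfl | rfl
                  exacts [absurd hzA hAv, absurd hzA hAu, absurd hzA hAp]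
              refine step2 q q (Or.inl rfl) ?_ ⟨v, hvT, fun h => hqT (h ▸ hvT), fun h => hqT (h ▸ hvT)⟩
                ⟨a, haC, ha.ne', ha.ne'⟩
              intro z hzT hzA
              rcases (hmemT z).mp hzT with rfl | rfl | rfl
              · exact absurd hzA hAv
              · exact absurd hzA hAu
              · exact absurd hzA hAp
    · -- contraction case: contract an edge at an interior vertex
      obtain ⟨na, nb, nc, hab, hac, hbc, ha, hb, hc⟩ := hdeg v0 hv0x hv0y
      have hnc : ∀ z, ¬ (G.Adj v0 z ∧ G.Adj na z) := by
        intro z hz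
        exact htri ⟨v0, na, z, ⟨hv0x, hv0y⟩, ha, hz.1, hz.2⟩
      have hav0 : G.Adj na v0 := ha.symm
      have hcard' : Fintype.card {w : V // w ≠ v0} ≤ n := by
        have hlt : Fintype.card {w : V // w ≠ v0} < Fintype.card V := by
          refine Fintype.card_lt_of_injective_of_notMem Subtype.val
            Subtype.coe_injective (b := v0) ?_
          rintro ⟨⟨z, hz⟩, h⟩; exact hz h
        omega
      have hK4' : IsMinorOf (completeGraph (Fin 4)) (Contract G na v0) := by
        refine IH _ (Contract G na v0) hcard' ⟨x₀, Ne.symm hv0x⟩ ⟨y₀, Ne.symm hv0y⟩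
          ?_ ?_ ?_
        · rcases hxy with h | h
          · exact Or.inl (Subtype.ext h)
          · exact Or.inr (contract_adj_of_adj h)
        · rintro ⟨w, hwv⟩ h1 h2
          have hwx : w ≠ x₀ := fun h => h1 (Subtype.ext h)
          have hwy : w ≠ y₀ := fun h => h2 (Subtype.ext h)
          obtain ⟨z1, z2, z3, h12, h13, h23, hz1, hz2, hz3⟩ := hdeg w hwx hwy
          set r : V := if w = na then nb else na with hrdef
          have hrv0 : r ≠ v0 := by
            rw [hrdef]; split_ifs
            · exact hb.ne'
            · exact ha.ne'
          have hrne : ∀ z, G.Adj w z → z ≠ v0 → G.Adj w v0 → r ≠ z := by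
            intro z hz hzv0 hwv0 hrz
            rw [hrdef] at hrz
            by_cases hwa : w = na
            · rw [if_pos hwa] at hrz
              subst hrz
              exact hnc nb ⟨hb, hwa ▸ hz⟩
            · rw [if_neg hwa] at hrz
              subst hrz
              exact hnc w ⟨hwv0.symm, hz.symm⟩
          have hone : ∀ z, G.Adj w z → ∃ t : {x : V // x ≠ v0},
              (Contract G na v0).Adj ⟨w, hwv⟩ t ∧
                ((z ≠ v0 ∧ (t : V) = z) ∨ (z = v0 ∧ (t : V) = r)) := by
            intro z hz
            by_cases hzv : z = v0
            · rw [hzv] at hz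
              refine ⟨⟨r, hrv0⟩, ?_, Or.inr ⟨hzv, rfl⟩⟩
              by_cases hwa : w = na
              · have hreq : r = nb := by rw [hrdef, if_pos hwa]
                refine ⟨show (w : V) ≠ r from ?_,
                  Or.inr (Or.inl ⟨hwa, show G.Adj v0 r from ?_⟩)⟩
                · rw [hreq, hwa]; exact hab
                · rw [hreq]; exact hb
              · have hreq : r = na := by rw [hrdef, if_neg hwa]
                refine ⟨show (w : V) ≠ r from ?_,
                  Or.inr (Or.inr ⟨show (r : V) = na from hreq, hz.symm⟩)⟩
                rw [hreq]; exact hwa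
            · exact ⟨⟨z, hzv⟩, ⟨hz.ne, Or.inl hz⟩, Or.inl ⟨hzv, rfl⟩⟩
          have hinj : ∀ (z z' : V) (t t' : {x : V // x ≠ v0}), z ≠ z' →
              G.Adj w z → G.Adj w z' →
              ((z ≠ v0 ∧ (t : V) = z) ∨ (z = v0 ∧ (t : V) = r)) →
              ((z' ≠ v0 ∧ (t' : V) = z') ∨ (z' = v0 ∧ (t' : V) = r)) → t ≠ t' := by
            rintro z z' t t' hne hz hz' (⟨hzv, ht⟩ | ⟨rfl, ht⟩)
              (⟨hzv', ht'⟩ | ⟨rfl, ht'⟩) heq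
            · exact hne (by rw [← ht, ← ht', heq])
            · exact hrne z hz hzv hz' (by rw [← ht', ← congrArg Subtype.val heq, ht])
            · exact hrne z' hz' hzv' hz (by rw [← ht, congrArg Subtype.val heq, ht'])
            · exact hne rfl
          obtain ⟨t1, ht1, hp1⟩ := hone z1 hz1
          obtain ⟨t2, ht2, hp2⟩ := hone z2 hz2
          obtain ⟨t3, ht3, hp3⟩ := hone z3 hz3
          exact ⟨t1, t2, t3, hinj z1 z2 t1 t2 h12 hz1 hz2 hp1 hp2,
            hinj z1 z3 t1 t3 h13 hz1 hz3 hp1 hp3,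
            hinj z2 z3 t2 t3 h23 hz2 hz3 hp2 hp3, ht1, ht2, ht3⟩
        · have hW : ∃ w, w ≠ x₀ ∧ w ≠ y₀ ∧ w ≠ v0 := by
            by_contra hcon
            push_neg at hcon
            have hmem : ∀ z, G.Adj v0 z → z = x₀ ∨ z = y₀ := by
              intro z hz
              by_contra hzz; push_neg at hzz
              exact hz.ne' (hcon z hzz.1 hzz.2)
            exact no_two_cover hab hac hbc (hmem na ha) (hmem nb hb) (hmem nc hc)
          obtain ⟨w, h1, h2, h3⟩ := hW
          exact ⟨⟨w, h3⟩, fun h => h1 (congrArg Subtype.val h),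
            fun h => h2 (congrArg Subtype.val h)⟩
      exact isMinorOf_contract hav0 hK4'

/-- Every finite `K₄`-minor-free graph has a vertex with at most two neighbors. -/
lemma exists_lowdeg {V : Type u} [Fintype V] [Nonempty V] {G : SimpleGraph V}
    (h : ¬ IsMinorOf (completeGraph (Fin 4)) G) : ∃ v, ¬ ThreeNbrs G v := by
  by_contra hcon
  push_neg at hcon
  obtain ⟨v₀⟩ := ‹Nonempty V›
  obtain ⟨a, b, c, hab, -, -, ha, -, -⟩ := hcon v₀
  exact h (deg3_K4 (Fintype.card V) V G le_rfl v₀ v₀ (Or.inl rfl)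
    (fun w hw _ => hcon w) ⟨a, ha.ne', ha.ne'⟩)

lemma mem_support_of_rotate [DecidableEq V] {G : SimpleGraph V} {a v : V} {p : G.Walk a a}
    (hv : v ∈ p.support) {x : V} (hx : x ∈ (p.rotate v hv).support) : x ∈ p.support := by
  rw [SimpleGraph.Walk.support_eq_cons (p.rotate v hv)] at hx
  rcases List.mem_cons.mp hx with rfl | hx
  · exact hv
  · have := (SimpleGraph.Walk.support_rotate p v hv).mem_iff.mp hx
    rw [SimpleGraph.Walk.support_eq_cons p]
    exact List.mem_cons_of_mem _ this

/-- A vertex on a cycle has two distinct neighbors on the cycle. -/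
lemma cycle_two_nbrs [DecidableEq V] {G : SimpleGraph V} {a : V} {p : G.Walk a a} (hp : p.IsCycle)
    {v : V} (hv : v ∈ p.support) :
    ∃ b c, b ≠ c ∧ G.Adj v b ∧ G.Adj v c ∧ b ∈ p.support ∧ c ∈ p.support := by
  have hq : (p.rotate v hv).IsCycle := hp.rotate hv
  have h3 := hq.three_le_length
  revert hq h3
  generalize hgen : p.rotate v hv = q
  have hmem : ∀ x ∈ q.support, x ∈ p.support := fun x hx =>
    mem_support_of_rotate hv (hgen ▸ hx)
  clear hgen
  intro hq h3
  cases q with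
  | nil => simp at hq
  | @cons _ b _ h r =>
    have hrlen : 0 < r.length := by
      simp only [SimpleGraph.Walk.length_cons] at h3; omega
    have hrnil : ¬ r.reverse.Nil := by
      rw [SimpleGraph.Walk.not_nil_iff_lt_length, SimpleGraph.Walk.length_reverse]
      exact hrlen
    obtain ⟨c, h', r'', hrev⟩ := SimpleGraph.Walk.not_nil_iff.mp hrnil
    refine ⟨b, c, ?_, h, h', hmem b (by simp [SimpleGraph.Walk.support_cons,
        SimpleGraph.Walk.start_mem_support]), hmem c ?_⟩
    · -- b ≠ c, using nodup edges
      intro hbc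
      have hnodup := hq.edges_nodup
      rw [SimpleGraph.Walk.edges_cons, List.nodup_cons] at hnodup
      have hcmem : s(v, c) ∈ r.edges := by
        have : s(v, c) ∈ r.reverse.edges := by
          rw [hrev, SimpleGraph.Walk.edges_cons]; exact List.mem_cons_self
        rwa [SimpleGraph.Walk.edges_reverse, List.mem_reverse] at this
      rw [← hbc] at hcmem
      exact hnodup.1 hcmem
    · -- c ∈ support
      have : c ∈ r.reverse.support := by
        rw [hrev, SimpleGraph.Walk.support_cons]
        exact List.mem_cons_of_mem _ r''.start_mem_support
      rw [SimpleGraph.Walk.support_reverse, List.mem_reverse] at this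
      simp [SimpleGraph.Walk.support_cons, this]

/-- Every vertex of a positive-length walk lies on one of its edges. -/
lemma mem_edge_of_mem_support {G : SimpleGraph V} :
    ∀ {a b : V} (p : G.Walk a b), p.length ≠ 0 → ∀ x ∈ p.support, ∃ e ∈ p.edges, x ∈ e
  | _, _, SimpleGraph.Walk.nil, hlen, _, _ => absurd rfl hlen
  | a, b, @SimpleGraph.Walk.cons _ _ _ w _ h q, _, x, hx => by
    rcases List.mem_cons.mp (by simpa [SimpleGraph.Walk.support_cons] using hx)
      with rfl | hx'
    · exact ⟨s(x, w), by simp [SimpleGraph.Walk.edges_cons], by simp⟩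
    · by_cases hq : q.length = 0
      · cases q with
        | nil =>
          simp only [SimpleGraph.Walk.support_nil, List.mem_singleton] at hx'
          subst hx'
          exact ⟨s(a, x), by simp [SimpleGraph.Walk.edges_cons], by simp⟩
        | cons h' q' => simp at hq
      · obtain ⟨e, he, hxe⟩ := mem_edge_of_mem_support q hq x hx'
        exact ⟨e, by simp [SimpleGraph.Walk.edges_cons, he], hxe⟩

/-- In a path of length at least two, the endpoints are not joined by an edge
of the path. -/
lemma endpoints_edge_not_mem {G : SimpleGraph V} {x y : V} {p : G.Walk x y}
    (hp : p.IsPath) (hlen : 2 ≤ p.length) (hxy : x ≠ y) : s(x, y) ∉ p.edges := by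
  intro hmem
  cases p with
  | nil => simp at hlen
  | @cons _ w _ h q =>
    rw [SimpleGraph.Walk.edges_cons, List.mem_cons] at hmem
    rcases hmem with heq | hmem
    · rw [Sym2.eq_iff] at heq
      rcases heq with ⟨-, rfl⟩ | ⟨rfl, rfl⟩
      · -- q : G.Walk y y is a path of positive length
        have hq : q.IsPath := hp.of_cons
        have hlq : 0 < q.length := by
          simp only [SimpleGraph.Walk.length_cons] at hlen; omega
        cases q with
        | nil => simp at hlq
        | cons h' q' =>
          have := hq.support_nodup
          rw [SimpleGraph.Walk.support_cons, List.nodup_cons] at this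
          exact this.1 q'.end_mem_support
      · exact hxy rfl
    · have := hp.support_nodup
      rw [SimpleGraph.Walk.support_cons, List.nodup_cons] at this
      exact this.1 (q.fst_mem_support_of_mem_edges hmem)

lemma cover_contradiction {G : SimpleGraph V} {u v : V} {f' : {w : V // w ≠ v} → Fin 3}
    (hf' : AcyclicColoring (Contract G u v) f')
    (f : V → Fin 3) (hfw : ∀ (w : V) (h : w ≠ v), f w = f' ⟨w, h⟩)
    {a : V} (p : G.Walk a a) (hp : p.IsCycle) (hsupp : ∀ x ∈ p.support, x ≠ v) :
    ¬ ∃ α β, ∀ x ∈ p.support, f x = α ∨ f x = β := by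
  rintro ⟨α, β, hcov⟩
  have ha : a ≠ v := hsupp a p.start_mem_support
  have hq := Walk.toContract_isCycle G u v p hsupp ha hp
  refine hf'.2 _ hq ⟨α, β, ?_⟩
  rintro ⟨x, hx⟩ hmem
  have hxp : x ∈ p.support := by
    rw [← Walk.toContract_support G u v p hsupp ha ha]
    exact List.mem_map_of_mem hmem
  have hcx := hcov x hxp
  rwa [hfw x hx] at hcx

lemma fin3_third : ∀ a b : Fin 3, a ≠ b → ∃ c : Fin 3, c ≠ a ∧ c ≠ b := by decide

lemma fin3_succ_ne : ∀ a : Fin 3, a + 1 ≠ a := by decide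

/-- Every finite `K₄`-minor-free graph has an acyclic 3-coloring. -/
lemma acyclic3 : ∀ (n : ℕ) (V : Type u) [Fintype V] (G : SimpleGraph V),
    Fintype.card V ≤ n → ¬ IsMinorOf (completeGraph (Fin 4)) G →
    ∃ f : V → Fin 3, AcyclicColoring G f := by
  intro n
  induction n with
  | zero =>
    intro V _ G hcard _
    have hem : IsEmpty V := Fintype.card_eq_zero_iff.mp (Nat.le_zero.mp hcard)
    refine ⟨fun v => (hem.elim v), fun a b h => (hem.elim a), ?_⟩
    intro a p hp
    exact (hem.false a).elim
  | succ n IH =>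
    intro V _ G hcard hK4
    classical
    by_cases hne : Nonempty V
    · haveI := hne
      obtain ⟨v, hv3⟩ := exists_lowdeg hK4
      by_cases hsingle : ∀ w : V, w = v
      · refine ⟨fun _ => 0, fun a b hadj => ?_, fun a p hp _ => ?_⟩
        · exact absurd ((hsingle a) ▸ (hsingle b) ▸ hadj) G.irrefl
        · cases p with
          | nil => simp at hp
          | @cons _ w _ h q => exact h.ne ((hsingle a).trans (hsingle w).symm)
      · push_neg at hsingle
        obtain ⟨u₀, hu₀⟩ := hsingle
        have hcard' : Fintype.card {w : V // w ≠ v} ≤ n := by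
          have hlt : Fintype.card {w : V // w ≠ v} < Fintype.card V := by
            refine Fintype.card_lt_of_injective_of_notMem Subtype.val
              Subtype.coe_injective (b := v) ?_
            rintro ⟨⟨z, hz⟩, h⟩; exact hz h
          omega
        by_cases hz1 : ∃ z, G.Adj v z
        · obtain ⟨x, hx⟩ := hz1
          have hxv : x ≠ v := hx.ne'
          have huv : G.Adj x v := hx.symm
          have hK4' : ¬ IsMinorOf (completeGraph (Fin 4)) (Contract G x v) :=
            fun h => hK4 (isMinorOf_contract huv h)
          obtain ⟨f', hf'⟩ := IH _ (Contract G x v) hcard' hK4'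
          by_cases hz2 : ∃ z, G.Adj v z ∧ z ≠ x
          · -- two neighbors x and y
            obtain ⟨y, hy, hyx⟩ := hz2
            have hyv : y ≠ v := hy.ne'
            have hchar : ∀ z, G.Adj v z → z = x ∨ z = y := by
              intro z hz
              by_contra hcon; push_neg at hcon
              exact hv3 ⟨x, y, z, hyx.symm, hcon.1.symm, hcon.2.symm, hx, hy, hz⟩
            have hadjxy : (Contract G x v).Adj ⟨x, hxv⟩ ⟨y, hyv⟩ :=
              ⟨hyx.symm, Or.inr (Or.inl ⟨rfl, hy⟩)⟩
            have hfxy : f' ⟨x, hxv⟩ ≠ f' ⟨y, hyv⟩ := hf'.1 hadjxy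
            obtain ⟨c₀, hc₀x, hc₀y⟩ := fin3_third _ _ hfxy
            set f : V → Fin 3 := fun w => if h : w = v then c₀ else f' ⟨w, h⟩ with hfdef
            have hfv : f v = c₀ := by rw [hfdef]; simp
            have hfw : ∀ (w : V) (h : w ≠ v), f w = f' ⟨w, h⟩ := by
              intro w h; rw [hfdef]; simp [h]
            refine ⟨f, ?_, ?_⟩
            · intro a b hadj
              by_cases hav : a = v
              · subst hav
                rcases hchar b hadj with rfl | rfl
                · rw [hfv, hfw b hadj.ne']; exact hc₀x
                · rw [hfv, hfw b hadj.ne']; exact hc₀y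
              · by_cases hbv : b = v
                · subst hbv
                  rcases hchar a hadj.symm with rfl | rfl
                  · rw [hfv, hfw a hadj.ne]; exact fun h => hc₀x h.symm
                  · rw [hfv, hfw a hadj.ne]; exact fun h => hc₀y h.symm
                · rw [hfw a hav, hfw b hbv]
                  exact hf'.1 (contract_adj_of_adj (a := ⟨a, hav⟩) (b := ⟨b, hbv⟩) hadj)
            · intro a p hp hcov
              by_cases hvp : v ∈ p.support
              · obtain ⟨b, c, hbc, hvb, hvc, hbp, hcp⟩ := cycle_two_nbrs hp hvp
                obtain ⟨α, β, hcov⟩ := hcov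
                have hxy_mem : x ∈ p.support ∧ y ∈ p.support := by
                  rcases hchar b hvb with rfl | rfl <;> rcases hchar c hvc with rfl | rfl
                  · exact absurd rfl hbc
                  · exact ⟨hbp, hcp⟩
                  · exact ⟨hcp, hbp⟩
                  · exact absurd rfl hbc
                have h1 : f v ≠ f x := by rw [hfv, hfw x hxv]; exact hc₀x
                have h2 : f v ≠ f y := by rw [hfv, hfw y hyv]; exact hc₀y
                have h3 : f x ≠ f y := by rw [hfw x hxv, hfw y hyv]; exact hfxy
                exact no_two_cover h1 h2 h3 (hcov v hvp)
                  (hcov x hxy_mem.1) (hcov y hxy_mem.2)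
              · exact cover_contradiction hf' f hfw p hp
                  (fun z hz h => hvp (h ▸ hz)) hcov
          · -- unique neighbor x
            push_neg at hz2
            set f : V → Fin 3 := fun w =>
              if h : w = v then f' ⟨x, hxv⟩ + 1 else f' ⟨w, h⟩ with hfdef
            have hfv : f v = f' ⟨x, hxv⟩ + 1 := by rw [hfdef]; simp
            have hfw : ∀ (w : V) (h : w ≠ v), f w = f' ⟨w, h⟩ := by
              intro w h; rw [hfdef]; simp [h]
            refine ⟨f, ?_, ?_⟩
            · intro a b hadj
              by_cases hav : a = v
              · subst hav
                have hbx : b = x := hz2 b hadj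
                subst hbx
                rw [hfv, hfw b hadj.ne']
                exact fin3_succ_ne _
              · by_cases hbv : b = v
                · subst hbv
                  have hax : a = x := hz2 a hadj.symm
                  subst hax
                  rw [hfv, hfw a hadj.ne]
                  exact fun h => fin3_succ_ne _ h.symm
                · rw [hfw a hav, hfw b hbv]
                  exact hf'.1 (contract_adj_of_adj (a := ⟨a, hav⟩) (b := ⟨b, hbv⟩) hadj)
            · intro a p hp hcov
              by_cases hvp : v ∈ p.support
              · obtain ⟨b, c, hbc, hvb, hvc, -, -⟩ := cycle_two_nbrs hp hvp
                exact absurd ((hz2 b hvb).trans (hz2 c hvc).symm) hbc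
              · exact cover_contradiction hf' f hfw p hp
                  (fun z hz h => hvp (h ▸ hz)) hcov
        · -- no neighbors
          push_neg at hz1
          have hK4' : ¬ IsMinorOf (completeGraph (Fin 4)) (Contract G u₀ v) :=
            fun h => hK4 (isMinorOf_contract_isolated hu₀ (fun b hb => hz1 b hb) h)
          obtain ⟨f', hf'⟩ := IH _ (Contract G u₀ v) hcard' hK4'
          set f : V → Fin 3 := fun w => if h : w = v then 0 else f' ⟨w, h⟩ with hfdef
          have hfw : ∀ (w : V) (h : w ≠ v), f w = f' ⟨w, h⟩ := by
            intro w h; rw [hfdef]; simp [h]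
          refine ⟨f, ?_, ?_⟩
          · intro a b hadj
            by_cases hav : a = v
            · exact absurd (hav ▸ hadj) (hz1 b)
            · by_cases hbv : b = v
              · exact absurd (hbv ▸ hadj).symm (hz1 a)
              · rw [hfw a hav, hfw b hbv]
                exact hf'.1 (contract_adj_of_adj (a := ⟨a, hav⟩) (b := ⟨b, hbv⟩) hadj)
          · intro a p hp hcov
            by_cases hvp : v ∈ p.support
            · obtain ⟨b, -, -, hvb, -, -, -⟩ := cycle_two_nbrs hp hvp
              exact hz1 b hvb
            · exact cover_contradiction hf' f hfw p hp
                (fun z hz h => hvp (h ▸ hz)) hcov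
    · -- empty vertex type
      have hem : IsEmpty V := not_nonempty_iff.mp hne
      refine ⟨fun v => (hem.elim v), fun a b h => (hem.elim a), ?_⟩
      intro a p hp
      exact (hem.false a).elim

lemma fin3_sum_ne : ∀ s t : Fin 3, s ≠ t → s ≠ -(s + t) ∧ t ≠ -(s + t) := by decide

lemma fin3_other : ∀ m t : Fin 3, t ≠ m → t = m + 1 ∨ t = m + 2 := by decide

lemma stronglyWoody_of_acyclic {G : SimpleGraph V} {f : V → Fin 3}
    (hf : AcyclicColoring G f) :
    ∃ c : Sym2 V → Fin 3, StronglyWoody G c := by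
  refine ⟨Sym2.lift ⟨fun a b => -(f a + f b), fun a b => by simp only []; rw [add_comm]⟩, ?_⟩
  rintro x y p hp hlen hadj ⟨m, hm⟩
  have hxy : x ≠ y := hadj.ne
  have hsup : ∀ w ∈ p.support, f w ≠ m := by
    intro w hw
    obtain ⟨e, he, hwe⟩ := mem_edge_of_mem_support p (by omega) w hw
    induction e with
    | h a b =>
      have hab : G.Adj a b := p.adj_of_mem_edges he
      have hcab : -(f a + f b) = m := by
        have := hm _ he
        simpa using this
      have hne := fin3_sum_ne (f a) (f b) (hf.1 hab)
      rw [Sym2.mem_iff] at hwe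
      rcases hwe with rfl | rfl
      · rw [← hcab]; exact hne.1
      · rw [← hcab]; exact hne.2
  have hq : (SimpleGraph.Walk.cons hadj.symm p).IsCycle := by
    rw [SimpleGraph.Walk.cons_isCycle_iff]
    refine ⟨hp, ?_⟩
    rw [Sym2.eq_swap]
    exact endpoints_edge_not_mem hp hlen hxy
  refine hf.2 _ hq ⟨m + 1, m + 2, ?_⟩
  intro z hz
  rw [SimpleGraph.Walk.support_cons, List.mem_cons] at hz
  rcases hz with rfl | hz
  · exact fin3_other m (f z) (hsup z p.end_mem_support)
  · exact fin3_other m (f z) (hsup z hz)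

end AuxiliaryLemmas

/-- Every outerplanar graph has strong arboricity at most 3. -/
theorem stmt3 {V : Type*} [Fintype V] (G : SimpleGraph V) (hG : Outerplanar G) :
    strongArboricity G ≤ 3 := by
  obtain ⟨f, hf⟩ := acyclic3 (Fintype.card V) V G le_rfl hG.1
  obtain ⟨c, hc⟩ := stronglyWoody_of_acyclic hf
  exact Nat.sInf_le ⟨c, hc⟩
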